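/- arXiv:2601.06532 — 3 statements merged into one kernel-verified Lean document; each statement's English description precedes it below -/
import Mathlib

section
/- Inner automorphisms are realized by braids: Let G be a group and (g₁,…,g_r) ∈ G^r a tuple with g₁⋯g_r = 1. Then for every element a of the subgroup of G generated by {g₁,…,g_r}, the componentwise conjugated tuple (a g₁ a⁻¹, …, a g_r a⁻¹) is braid-equivalent to (g₁,…,g_r). In particular, if the entries generate G, conjugation by any element of G preserves the braid orbit. -/
/-- The elementary braid move `Q_i`: `w` is obtained from `v` by replacing
`(…, g_i, g_{i+1}, …)` with `(…, g_i g_{i+1} g_i⁻¹, g_i, …)`. -/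
def BraidStep {G : Type*} [Group G] {r : ℕ} (v w : Fin r → G) : Prop :=
  ∃ i : ℕ, ∃ h : i + 1 < r,
    w ⟨i, Nat.lt_of_succ_lt h⟩ =
      v ⟨i, Nat.lt_of_succ_lt h⟩ * v ⟨i + 1, h⟩ * (v ⟨i, Nat.lt_of_succ_lt h⟩)⁻¹ ∧
    w ⟨i + 1, h⟩ = v ⟨i, Nat.lt_of_succ_lt h⟩ ∧
    ∀ j : Fin r, j.val ≠ i → j.val ≠ i + 1 → w j = v j

/-- Two tuples are braid-equivalent if they are related by the equivalence relation
generated by the elementary braid moves and their inverses (the Hurwitz action of `B_r`). -/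
def BraidEquiv {G : Type*} [Group G] {r : ℕ} (v w : Fin r → G) : Prop :=
  Relation.EqvGen BraidStep v w

section Aux

variable {G : Type*} [Group G]

lemma braidEquiv_chain {r : ℕ} (v : ℕ → Fin r → G) :
    ∀ n, (∀ k, k < n → BraidStep (v k) (v (k+1))) → BraidEquiv (v 0) (v n)
  | 0, _ => Relation.EqvGen.refl _
  | n+1, h => Relation.EqvGen.trans _ _ _
      (braidEquiv_chain v n fun k hk => h k (by omega))
      (Relation.EqvGen.rel _ _ (h n (by omega)))

lemma braidStep_conj {r : ℕ} {v w : Fin r → G} (a : G) (h : BraidStep v w) :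
    BraidStep (fun i => a * v i * a⁻¹) (fun i => a * w i * a⁻¹) := by
  obtain ⟨i, hi, h1, h2, h3⟩ := h
  refine ⟨i, hi, ?_, ?_, fun j hj hj' => ?_⟩
  · show a * w _ * a⁻¹ = (a * v _ * a⁻¹) * (a * v _ * a⁻¹) * (a * v _ * a⁻¹)⁻¹
    rw [h1]; group
  · show a * w _ * a⁻¹ = a * v _ * a⁻¹
    rw [h2]
  · show a * w j * a⁻¹ = a * v j * a⁻¹
    rw [h3 j hj hj']

lemma braidEquiv_conj {r : ℕ} {v w : Fin r → G} (a : G) (h : BraidEquiv v w) :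
    BraidEquiv (fun i => a * v i * a⁻¹) (fun i => a * w i * a⁻¹) := by
  induction h with
  | rel x y hxy => exact Relation.EqvGen.rel _ _ (braidStep_conj a hxy)
  | refl x => exact Relation.EqvGen.refl _
  | symm x y _ ih => exact Relation.EqvGen.symm _ _ ih
  | trans x y z _ _ ih1 ih2 => exact Relation.EqvGen.trans _ _ _ ih1 ih2

/-- Chain C1: `g ~ (g₀g₁g₀⁻¹, …, g₀gₙg₀⁻¹, g₀)`. -/
lemma braidEquiv_delta {n : ℕ} (g : Fin (n+1) → G) :
    BraidEquiv g (fun j => if h : j.val < n then g 0 * g ⟨j.val+1, by omega⟩ * (g 0)⁻¹ else g 0) := by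
  set v : ℕ → Fin (n+1) → G := fun k j =>
    if h : j.val < k ∧ j.val < n then g 0 * g ⟨j.val+1, by omega⟩ * (g 0)⁻¹
    else if j.val = k then g 0 else g j with hv
  have hv1 : ∀ (j : Fin (n+1)) (k : ℕ) (h1 : j.val < k) (h2 : j.val < n),
      v k j = g 0 * g ⟨j.val+1, by omega⟩ * (g 0)⁻¹ := fun j k h1 h2 => dif_pos ⟨h1, h2⟩
  have hv2 : ∀ (j : Fin (n+1)) (k : ℕ) (h1 : ¬(j.val < k ∧ j.val < n)) (h2 : j.val = k),
      v k j = g 0 := fun j k h1 h2 => by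
    rw [hv]; exact (dif_neg h1).trans (if_pos h2)
  have hv3 : ∀ (j : Fin (n+1)) (k : ℕ) (h1 : ¬(j.val < k ∧ j.val < n)) (h2 : j.val ≠ k),
      v k j = g j := fun j k h1 h2 => by
    rw [hv]; exact (dif_neg h1).trans (if_neg h2)
  have h0 : v 0 = g := by
    funext j
    rcases eq_or_ne j.val 0 with h | h
    · rw [hv2 j 0 (by omega) h]
      congr 1
      exact Fin.ext h.symm
    · rw [hv3 j 0 (by omega) h]
  have hn : v n = fun j => if h : j.val < n then g 0 * g ⟨j.val+1, by omega⟩ * (g 0)⁻¹ else g 0 := by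
    funext j
    have hj := j.isLt
    rcases lt_or_ge j.val n with h | h
    · rw [hv1 j n h h, dif_pos h]
    · rw [hv2 j n (by omega) (by omega), dif_neg (by omega)]
  have key := braidEquiv_chain v n (fun k hk => by
    refine ⟨k, by omega, ?_, ?_, ?_⟩
    · rw [hv1 ⟨k, by omega⟩ (k+1) (Nat.lt_succ_self k) hk,
        hv2 ⟨k, by omega⟩ k (fun hc => absurd hc.1 (lt_irrefl k)) rfl,
        hv3 ⟨k+1, by omega⟩ k (fun hc => absurd hc.1 (show ¬ k+1 < k by omega)) (Nat.succ_ne_self k)]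
    · rw [hv2 ⟨k+1, by omega⟩ (k+1) (fun hc => absurd hc.1 (lt_irrefl _)) rfl,
        hv2 ⟨k, by omega⟩ k (fun hc => absurd hc.1 (lt_irrefl k)) rfl]
    · intro j hj1 hj2
      rcases lt_or_gt_of_ne hj1 with h | h
      · rw [hv1 j _ (by omega) (by omega), hv1 j _ (by omega) (by omega)]
      · rw [hv3 j _ (by omega) (by omega), hv3 j _ (by omega) (by omega)])
  rw [h0, hn] at key
  exact key

/-- Chain C2: if the product is 1, `g ~ (gₙ, g₀, …, g_{n-1})`. -/
lemma braidEquiv_shift {n : ℕ} (g : Fin (n+1) → G) (hprod : (List.ofFn g).prod = 1) :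
    BraidEquiv g (fun j => if h : j.val = 0 then g ⟨n, by omega⟩ else g ⟨j.val - 1, by omega⟩) := by
  set d : ℕ → G := fun k => ((List.ofFn g).drop k).prod with hd
  have hdrec : ∀ (k : ℕ) (hk : k < n + 1), d k = g ⟨k, hk⟩ * d (k+1) := by
    intro k hk
    rw [hd]
    show ((List.ofFn g).drop k).prod = _
    rw [List.drop_eq_getElem_cons (by simpa using hk), List.prod_cons, List.getElem_ofFn]
  have hdn : d n = g ⟨n, Nat.lt_succ_self n⟩ := by
    rw [hdrec n (Nat.lt_succ_self n)]
    have h1 : d (n+1) = 1 := by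
      rw [hd]
      show ((List.ofFn g).drop (n+1)).prod = 1
      rw [List.drop_of_length_le (by simp), List.prod_nil]
    rw [h1, mul_one]
  have hd0 : d 0 = 1 := by
    rw [hd]; show ((List.ofFn g).drop 0).prod = 1; rw [List.drop_zero]; exact hprod
  set w : ℕ → Fin (n+1) → G := fun m j =>
    if j.val < n - m then g j
    else if h : j.val = n - m then d (n - m) * g ⟨n, Nat.lt_succ_self n⟩ * (d (n - m))⁻¹
    else g ⟨j.val - 1, by omega⟩ with hw
  have hw1 : ∀ (j : Fin (n+1)) (m : ℕ) (h : j.val < n - m),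
      w m j = g j := fun j m h => if_pos h
  have hw2 : ∀ (j : Fin (n+1)) (m : ℕ) (h1 : ¬ j.val < n - m) (h2 : j.val = n - m),
      w m j = d (n - m) * g ⟨n, Nat.lt_succ_self n⟩ * (d (n - m))⁻¹ := fun j m h1 h2 => by
    rw [hw]; exact (if_neg h1).trans (dif_pos h2)
  have hw3 : ∀ (j : Fin (n+1)) (m : ℕ) (h1 : ¬ j.val < n - m) (h2 : j.val ≠ n - m),
      w m j = g ⟨j.val - 1, by omega⟩ := fun j m h1 h2 => by
    rw [hw]; exact (if_neg h1).trans (dif_neg h2)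
  have h0 : w 0 = g := by
    funext j
    have hj := j.isLt
    rcases lt_or_ge j.val n with h | h
    · rw [hw1 j 0 (by omega)]
    · have hjn : j.val = n := by omega
      rw [hw2 j 0 (by omega) (by omega), Nat.sub_zero, hdn]
      have h2 : g j = g ⟨n, Nat.lt_succ_self n⟩ := by congr 1; exact Fin.ext hjn
      rw [h2]; group
  have hn : w n = fun j => if h : j.val = 0 then g ⟨n, by omega⟩ else g ⟨j.val - 1, by omega⟩ := by
    funext j
    rcases eq_or_ne j.val 0 with h | h
    · rw [hw2 j n (by omega) (by omega), dif_pos h, Nat.sub_self, hd0]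
      group
    · rw [hw3 j n (by omega) (by omega), dif_neg h]
  have key := braidEquiv_chain w n (fun m hm => by
    refine ⟨n - (m+1), by omega, ?_, ?_, ?_⟩
    · rw [hw2 ⟨n - (m+1), by omega⟩ (m+1) (show ¬ n-(m+1) < n-(m+1) by omega) rfl,
        hw1 ⟨n - (m+1), by omega⟩ m (show n-(m+1) < n-m by omega),
        hw2 ⟨n - (m+1) + 1, by omega⟩ m (show ¬ n-(m+1)+1 < n-m by omega) (show n-(m+1)+1 = n-m by omega)]
      have e1 : d (n - (m+1)) = g ⟨n - (m+1), by omega⟩ * d (n - m) := by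
        rw [hdrec (n - (m+1)) (by omega)]
        congr 2
        omega
      rw [e1]
      group
    · rw [hw3 ⟨n - (m+1) + 1, by omega⟩ (m+1) (show ¬ n-(m+1)+1 < n-(m+1) by omega) (show n-(m+1)+1 ≠ n-(m+1) by omega),
        hw1 ⟨n - (m+1), by omega⟩ m (show n-(m+1) < n-m by omega)]
      rfl
    · intro j hj1 hj2
      rcases lt_or_gt_of_ne hj1 with h | h
      · rw [hw1 j _ (by omega), hw1 j _ (by omega)]
      · rw [hw3 j _ (by omega) (by omega), hw3 j _ (by omega) (by omega)])
  rw [h0, hn] at key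
  exact key

lemma prod_shift {n : ℕ} (g : Fin (n+1) → G) (hprod : (List.ofFn g).prod = 1) :
    (List.ofFn fun j : Fin (n+1) =>
      if h : j.val = 0 then g ⟨n, by omega⟩ else g ⟨j.val - 1, by omega⟩).prod = 1 := by
  rw [List.ofFn_succ' g, List.prod_concat] at hprod
  rw [List.ofFn_succ, List.prod_cons]
  have h1 : (List.ofFn fun i : Fin n =>
      if h : ((i.succ : Fin (n+1))).val = 0 then g ⟨n, by omega⟩
      else g ⟨((i.succ : Fin (n+1))).val - 1, by omega⟩)
      = List.ofFn fun i : Fin n => g i.castSucc := by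
    congr 1
  have h2 : (if h : ((0 : Fin (n+1))).val = 0 then g ⟨n, Nat.lt_succ_self n⟩
      else g ⟨((0 : Fin (n+1))).val - 1, by omega⟩) = g ⟨n, Nat.lt_succ_self n⟩ := dif_pos rfl
  rw [h1, h2]
  have hlast : g (Fin.last n) = g ⟨n, Nat.lt_succ_self n⟩ := rfl
  rw [hlast] at hprod
  rw [eq_inv_of_mul_eq_one_left hprod]
  group

/-- Conjugation by the last entry is realized by braids. -/
lemma braidEquiv_conj_last {n : ℕ} (g : Fin (n+1) → G) (hprod : (List.ofFn g).prod = 1) :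
    BraidEquiv (fun i => g ⟨n, Nat.lt_succ_self n⟩ * g i * (g ⟨n, Nat.lt_succ_self n⟩)⁻¹) g := by
  set s : Fin (n+1) → G := fun j =>
    if h : j.val = 0 then g ⟨n, Nat.lt_succ_self n⟩ else g ⟨j.val - 1, by omega⟩ with hs
  have hgs : BraidEquiv g s := braidEquiv_shift g hprod
  have hsd : BraidEquiv s
      (fun j => if h : j.val < n then s 0 * s ⟨j.val+1, by omega⟩ * (s 0)⁻¹ else s 0) :=
    braidEquiv_delta s
  have heq : (fun j : Fin (n+1) => if h : j.val < n then s 0 * s ⟨j.val+1, by omega⟩ * (s 0)⁻¹ else s 0)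
      = fun i => g ⟨n, Nat.lt_succ_self n⟩ * g i * (g ⟨n, Nat.lt_succ_self n⟩)⁻¹ := by
    funext j
    have hj := j.isLt
    have hs0 : s 0 = g ⟨n, Nat.lt_succ_self n⟩ := dif_pos rfl
    rcases lt_or_ge j.val n with h | h
    · rw [dif_pos h, hs0]
      have h2 : s ⟨j.val + 1, by omega⟩ = g ⟨j.val, by omega⟩ := by
        rw [hs]
        refine (dif_neg (Nat.succ_ne_zero _)).trans ?_
        congr 1
      rw [h2, Fin.eta]
    · have hjn : j.val = n := by omega
      rw [dif_neg (by omega), hs0]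
      have h2 : g j = g ⟨n, Nat.lt_succ_self n⟩ := by congr 1; exact Fin.ext hjn
      rw [h2]; group
  rw [heq] at hsd
  exact Relation.EqvGen.symm _ _ (Relation.EqvGen.trans _ _ _ hgs hsd)

/-- Conjugation by any entry is realized by braids. -/
lemma braidEquiv_conj_entry {n : ℕ} :
    ∀ (m : ℕ) (g : Fin (n+1) → G) (hprod : (List.ofFn g).prod = 1) (k : ℕ) (hk : k + m = n),
      BraidEquiv (fun i => g ⟨k, by omega⟩ * g i * (g ⟨k, by omega⟩)⁻¹) g := by
  intro m
  induction m with
  | zero =>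
    intro g hprod k hk
    have hkn : k = n := by omega
    subst hkn
    exact braidEquiv_conj_last g hprod
  | succ m ih =>
    intro g hprod k hk
    set s : Fin (n+1) → G := fun j =>
      if h : j.val = 0 then g ⟨n, Nat.lt_succ_self n⟩ else g ⟨j.val - 1, by omega⟩ with hs
    have hgs : BraidEquiv g s := braidEquiv_shift g hprod
    have hsprod : (List.ofFn s).prod = 1 := prod_shift g hprod
    have hsk : s ⟨k+1, by omega⟩ = g ⟨k, by omega⟩ := by
      rw [hs]
      refine (dif_neg (Nat.succ_ne_zero _)).trans ?_
      congr 1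
    have h1 := ih s hsprod (k+1) (by omega)
    rw [hsk] at h1
    have h2 : BraidEquiv (fun i => g ⟨k, by omega⟩ * g i * (g ⟨k, by omega⟩)⁻¹)
        (fun i => g ⟨k, by omega⟩ * s i * (g ⟨k, by omega⟩)⁻¹) :=
      braidEquiv_conj _ hgs
    exact Relation.EqvGen.trans _ _ _ h2
      (Relation.EqvGen.trans _ _ _ h1 (Relation.EqvGen.symm _ _ hgs))

end Aux

/-- Inner automorphisms are realized by braids: if the tuple `g` has product `1`, then
componentwise conjugation by any element of the subgroup generated by its entries
preserves the braid orbit. -/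
theorem inner_automorphisms_realized_by_braids {G : Type*} [Group G] {r : ℕ}
    (g : Fin r → G) (hprod : (List.ofFn g).prod = 1)
    (a : G) (ha : a ∈ Subgroup.closure (Set.range g)) :
    BraidEquiv (fun i => a * g i * a⁻¹) g := by
  cases r with
  | zero =>
    have h : (fun i => a * g i * a⁻¹) = g := funext fun i => i.elim0
    rw [h]
    exact Relation.EqvGen.refl _
  | succ n =>
    induction ha using Subgroup.closure_induction with
    | mem x hx =>
      obtain ⟨k, rfl⟩ := hx
      have h := braidEquiv_conj_entry (n := n) (n - k.val) g hprod k.val (by omega)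
      have h2 : (⟨k.val, by omega⟩ : Fin (n+1)) = k := Fin.eta k k.isLt
      rw [h2] at h
      exact h
    | one =>
      have h : (fun i => (1:G) * g i * (1:G)⁻¹) = g := funext fun i => by group
      rw [h]
      exact Relation.EqvGen.refl _
    | mul x y hx hy hx' hy' =>
      have heq : (fun i => (x*y) * g i * (x*y)⁻¹)
          = fun i => x * (y * g i * y⁻¹) * x⁻¹ := funext fun i => by group
      rw [heq]
      exact Relation.EqvGen.trans _ _ _ (braidEquiv_conj x hy') hx'
    | inv x hx hx' =>
      have h := braidEquiv_conj x⁻¹ hx'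
      have heq : (fun i => x⁻¹ * (x * g i * x⁻¹) * x⁻¹⁻¹) = g := funext fun i => by group
      rw [heq] at h
      exact Relation.EqvGen.symm _ _ h
end

section
/- Commutation relation in the ring of components: Let G be a group, a = (g₁,…,g_r) ∈ G^r and b = (g'₁,…,g'_s) ∈ G^s, and set π = g₁⋯g_r. Then the concatenated tuple (g₁,…,g_r, g'₁,…,g'_s) of length r+s is braid-equivalent to the tuple (π g'₁ π⁻¹, …, π g'_s π⁻¹, g₁,…,g_r). (This identity [a]·[b] = [b^π]·[a] on braid orbits is the reason the ring of components of Hurwitz spaces of covers of ℙ¹ is commutative.) -/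
section Aux
variable {G : Type*} [Group G]

def LStep (l₁ l₂ : List G) : Prop :=
  ∃ p x y q, l₁ = p ++ x :: y :: q ∧ l₂ = p ++ (x * y * x⁻¹) :: x :: q

def LEquiv : List G → List G → Prop := Relation.EqvGen LStep

lemma LStep.length_eq {l₁ l₂ : List G} (h : LStep l₁ l₂) : l₁.length = l₂.length := by
  obtain ⟨p, x, y, q, rfl, rfl⟩ := h; simp

lemma LEquiv.length_eq {l₁ l₂ : List G} (h : LEquiv l₁ l₂) : l₁.length = l₂.length := by
  induction h with
  | rel _ _ h => exact h.length_eq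
  | refl => rfl
  | symm _ _ _ ih => omega
  | trans _ _ _ _ _ ih₁ ih₂ => omega

lemma LEquiv.refl (l : List G) : LEquiv l l := Relation.EqvGen.refl l
lemma LEquiv.trans {a b c : List G} (h₁ : LEquiv a b) (h₂ : LEquiv b c) : LEquiv a c :=
  Relation.EqvGen.trans _ _ _ h₁ h₂

lemma LEquiv.append_left (p : List G) {l₁ l₂ : List G} (h : LEquiv l₁ l₂) :
    LEquiv (p ++ l₁) (p ++ l₂) := by
  induction h with
  | rel u v h =>
    obtain ⟨p', x, y, q, rfl, rfl⟩ := h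
    exact Relation.EqvGen.rel _ _ ⟨p ++ p', x, y, q, by simp, by simp⟩
  | refl u => exact Relation.EqvGen.refl _
  | symm u v _ ih => exact Relation.EqvGen.symm _ _ ih
  | trans u v w _ _ ih₁ ih₂ => exact Relation.EqvGen.trans _ _ _ ih₁ ih₂

lemma LEquiv.cons (g : G) {l₁ l₂ : List G} (h : LEquiv l₁ l₂) :
    LEquiv (g :: l₁) (g :: l₂) := LEquiv.append_left [g] h

lemma moveOne (p : List G) (x : G) (q : List G) :
    LEquiv (p ++ x :: q) ((p.prod * x * p.prod⁻¹) :: (p ++ q)) := by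
  induction p with
  | nil => simpa using LEquiv.refl (x :: q)
  | cons h t ih =>
    refine LEquiv.trans (LEquiv.cons h ih) ?_
    have step : LStep (h :: (t.prod * x * t.prod⁻¹) :: (t ++ q))
        ((h * (t.prod * x * t.prod⁻¹) * h⁻¹) :: h :: (t ++ q)) :=
      ⟨[], h, t.prod * x * t.prod⁻¹, t ++ q, by simp, by simp⟩
    have e : (h :: t).prod * x * (h :: t).prod⁻¹ = h * (t.prod * x * t.prod⁻¹) * h⁻¹ := by
      simp [mul_assoc]
    rw [List.cons_append, e]
    exact Relation.EqvGen.rel _ _ step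

lemma listMain (q p : List G) :
    LEquiv (p ++ q) (q.map (fun y => p.prod * y * p.prod⁻¹) ++ p) := by
  induction q with
  | nil => simpa using LEquiv.refl p
  | cons y q' ih =>
    refine LEquiv.trans (moveOne p y q') ?_
    simpa using LEquiv.cons _ ih

lemma step_toFin {n : ℕ} {l₁ l₂ : List G} (h : LStep l₁ l₂) (h₁ : l₁.length = n) :
    BraidStep (fun i : Fin n => l₁.get (Fin.cast h₁.symm i))
      (fun i : Fin n => l₂.get (Fin.cast (h.length_eq ▸ h₁).symm i)) := by
  obtain ⟨p, x, y, q, rfl, rfl⟩ := h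
  refine ⟨p.length, by simp at h₁ ⊢; omega, ?_, ?_, ?_⟩
  · simp [List.get_eq_getElem, List.getElem_append_right, mul_assoc]
  · simp [List.get_eq_getElem, List.getElem_append_right]
  · intro j hj1 hj2
    simp only [List.get_eq_getElem, Fin.cast]
    rcases lt_or_ge j.val p.length with hlt | hge
    · rw [List.getElem_append_left hlt, List.getElem_append_left hlt]
    · have h2 : p.length + 2 ≤ j.val := by omega
      rw [List.getElem_append_right (by omega), List.getElem_append_right (by omega)]
      obtain ⟨k, hk⟩ : ∃ k, j.val - p.length = k + 2 := ⟨j.val - p.length - 2, by omega⟩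
      simp [hk]

lemma equiv_toFin {n : ℕ} {l₁ l₂ : List G} (h : LEquiv l₁ l₂) (h₁ : l₁.length = n)
    (h₂ : l₂.length = n) :
    BraidEquiv (fun i : Fin n => l₁.get (Fin.cast h₁.symm i))
      (fun i : Fin n => l₂.get (Fin.cast h₂.symm i)) := by
  induction h with
  | rel u v h => exact Relation.EqvGen.rel _ _ (step_toFin h h₁)
  | refl u => exact Relation.EqvGen.refl _
  | symm u v hs ih => exact Relation.EqvGen.symm _ _ (ih h₂ h₁)
  | trans u v w huv hvw ih₁ ih₂ =>
    have hv : v.length = n := LEquiv.length_eq huv ▸ h₁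
    exact Relation.EqvGen.trans _ _ _ (ih₁ h₁ hv) (ih₂ hv h₂)

end Aux

/-- Commutation relation in the ring of components: the concatenation `(a, b)` is
braid-equivalent to the concatenation `(b^π, a)`, where `π = a₁⋯a_r` is the product of
the entries of `a` and `b^π` is the componentwise conjugate of `b` by `π`. -/
theorem concat_comm_ring_of_components {G : Type*} [Group G] {r s : ℕ}
    (a : Fin r → G) (b : Fin s → G) :
    BraidEquiv (Fin.append a b)
      (fun i : Fin (r + s) =>
        Fin.append (fun j : Fin s => (List.ofFn a).prod * b j * ((List.ofFn a).prod)⁻¹) a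
          (Fin.cast (Nat.add_comm r s) i)) := by
  have key := equiv_toFin (listMain (List.ofFn b) (List.ofFn a))
    (n := r + s) (by simp) (by simp [Nat.add_comm])
  convert key using 2 with i i
  · -- Fin.append a b i = (List.ofFn a ++ List.ofFn b).get _
    rcases lt_or_ge i.val r with hlt | hge
    · rw [show i = Fin.castAdd s ⟨i, hlt⟩ by ext; rfl, Fin.append_left]
      simp [List.get_eq_getElem, List.getElem_append_left, hlt]
    · obtain ⟨k, hk⟩ : ∃ k : Fin s, i = Fin.natAdd r k :=
        ⟨⟨i - r, by omega⟩, by ext; simp; omega⟩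
      rw [hk, Fin.append_right]
      simp [List.get_eq_getElem, List.getElem_append_right, hge]
  · rcases lt_or_ge i.val s with hlt | hge
    · rw [show (Fin.cast (Nat.add_comm r s) i) = Fin.castAdd r (⟨i, hlt⟩ : Fin s) by ext; rfl,
        Fin.append_left]
      simp [List.get_eq_getElem, List.getElem_append_left, hlt]
    · rw [show (Fin.cast (Nat.add_comm r s) i) = Fin.natAdd s (⟨i - s, by omega⟩ : Fin r) by
        ext; simp; omega, Fin.append_right]
      simp only [List.get_eq_getElem]
      rw [List.getElem_append_right (by simp; omega)]
      simp
end

section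
/- Singleton lemma for products of components (key step of Seguin's field-of-definition theorem): Let G be a finite group and H, K subgroups such that the join ⟨H, K⟩ equals the set HK = {hk : h ∈ H, k ∈ K}. Let a = (a₁,…,a_r) be a tuple with entries in H, with a₁⋯a_r = 1, whose entries generate H, and let b = (b₁,…,b_s) be a tuple with entries in K, with b₁⋯b_s = 1, whose entries generate K. Then for all γ, δ ∈ ⟨H, K⟩ such that the join of γHγ⁻¹ and δKδ⁻¹ equals ⟨H, K⟩, the concatenation (γa₁γ⁻¹,…,γa_rγ⁻¹, δb₁δ⁻¹,…,δb_sδ⁻¹) is braid-equivalent to the concatenation (a₁,…,a_r, b₁,…,b_s). (The set of components [a^γ][b^δ] with such γ, δ is the singleton {[a][b]}.) -/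
open Pointwise

namespace SeguinAux

variable {G : Type*} [Group G]

theorem fin_add_one_val {n : ℕ} (j : Fin (n + 1)) (h : j.val < n) :
    ((j + 1 : Fin (n + 1))).val = j.val + 1 :=
  Fin.val_add_one_of_lt (by rw [Fin.lt_def, Fin.val_last]; exact h)

theorem fin_add_one_last {n : ℕ} (j : Fin (n + 1)) (h : j.val = n) :
    j + 1 = 0 := by
  have : j = Fin.last n := Fin.ext (by simpa [Fin.val_last] using h)
  rw [this, Fin.last_add_one]

/-- Componentwise conjugation of a tuple. -/
def cnj {r : ℕ} (g : G) (v : Fin r → G) : Fin r → G := fun i => g * v i * g⁻¹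

theorem braidStep_cnj {r : ℕ} (g : G) {v w : Fin r → G} (h : BraidStep v w) :
    BraidStep (cnj g v) (cnj g w) := by
  obtain ⟨i, hi, h1, h2, h3⟩ := h
  refine ⟨i, hi, ?_, ?_, ?_⟩
  · show g * w _ * g⁻¹ = (g * v _ * g⁻¹) * (g * v _ * g⁻¹) * (g * v _ * g⁻¹)⁻¹
    rw [h1]; group
  · show g * w _ * g⁻¹ = g * v _ * g⁻¹
    rw [h2]
  · intro j hj hj'
    show g * w j * g⁻¹ = g * v j * g⁻¹
    rw [h3 j hj hj']

theorem braidEquiv_cnj {r : ℕ} (g : G) {v w : Fin r → G} (h : BraidEquiv v w) :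
    BraidEquiv (cnj g v) (cnj g w) := by
  induction h with
  | rel x y hxy => exact Relation.EqvGen.rel _ _ (braidStep_cnj g hxy)
  | refl x => exact Relation.EqvGen.refl _
  | symm x y _ ih => exact Relation.EqvGen.symm _ _ ih
  | trans x y z _ _ ih1 ih2 => exact Relation.EqvGen.trans _ _ _ ih1 ih2

theorem cnj_prod {r : ℕ} (g : G) (v : Fin r → G) :
    (List.ofFn (cnj g v)).prod = g * (List.ofFn v).prod * g⁻¹ := by
  have key : ∀ l : List G, (l.map fun x => g * x * g⁻¹).prod = g * l.prod * g⁻¹ := by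
    intro l
    induction l with
    | nil => simp
    | cons x t ih => simp only [List.map_cons, List.prod_cons, ih]; group
  have : List.ofFn (cnj g v) = (List.ofFn v).map fun x => g * x * g⁻¹ := by
    rw [List.map_ofFn]; rfl
  rw [this, key]

/-- The elementary braid move as a function. -/
def Qm {r : ℕ} (i : ℕ) (v : Fin r → G) : Fin r → G := fun j =>
  if h : i + 1 < r then
    if j.val = i then v ⟨i, Nat.lt_of_succ_lt h⟩ * v ⟨i + 1, h⟩ * (v ⟨i, Nat.lt_of_succ_lt h⟩)⁻¹
    else if j.val = i + 1 then v ⟨i, Nat.lt_of_succ_lt h⟩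
    else v j
  else v j

theorem braidStep_Qm {r : ℕ} (i : ℕ) (h : i + 1 < r) (v : Fin r → G) :
    BraidStep v (Qm i v) := by
  refine ⟨i, h, ?_, ?_, ?_⟩
  · simp [Qm, h]
  · simp [Qm, h]
  · intro j hj hj'; simp [Qm, h, hj, hj']

/-- Partial products `v m * v (m+1) * ⋯ * v (r-2)`. -/
def pp {r : ℕ} (v : Fin r → G) (m : ℕ) : G :=
  if h : m + 1 < r then v ⟨m, Nat.lt_of_succ_lt h⟩ * pp v (m + 1) else 1
termination_by r - m

theorem pp_succ {r : ℕ} (v : Fin r → G) (m : ℕ) (h : m + 1 < r) :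
    pp v m = v ⟨m, Nat.lt_of_succ_lt h⟩ * pp v (m + 1) := by
  rw [pp]; simp [h]

theorem pp_top {r : ℕ} (v : Fin r → G) (m : ℕ) (h : ¬ m + 1 < r) : pp v m = 1 := by
  rw [pp]; simp [h]

theorem pp_spec {n : ℕ} (v : Fin (n + 1) → G) :
    ∀ k, k ≤ n → pp v (n - k) * v ⟨n, Nat.lt_succ_self n⟩ =
      ((List.ofFn v).drop (n - k)).prod := by
  intro k
  induction k with
  | zero =>
    intro _
    have h1 : n < (List.ofFn v).length := by simp
    have hd : (List.ofFn v).drop n = [v ⟨n, Nat.lt_succ_self n⟩] := by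
      rw [List.drop_eq_getElem_cons h1]
      have h2 : (List.ofFn v).drop (n + 1) = [] := by
        apply List.drop_eq_nil_of_le; simp
      rw [h2, List.getElem_ofFn]
    simp only [Nat.sub_zero, hd, List.prod_cons, List.prod_nil, mul_one]
    rw [pp_top v n (by omega), one_mul]
  | succ k ih =>
    intro hk
    have hm : n - (k + 1) + 1 = n - k := by omega
    have h1 : n - (k + 1) + 1 < n + 1 := by omega
    have h2 : n - (k + 1) < (List.ofFn v).length := by simp
    rw [pp_succ v _ h1, List.drop_eq_getElem_cons h2]
    rw [List.prod_cons, List.getElem_ofFn]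
    rw [mul_assoc, hm, ih (by omega)]

/-- The chain of braid moves realizing the inverse rotation. -/
def S {n : ℕ} (u : Fin (n + 1) → G) : ℕ → (Fin (n + 1) → G)
  | 0 => u
  | (k + 1) => Qm (n - 1 - k) (S u k)

theorem S_equiv {n : ℕ} (u : Fin (n + 1) → G) : ∀ k, k ≤ n → BraidEquiv u (S u k) := by
  intro k
  induction k with
  | zero => intro _; exact Relation.EqvGen.refl _
  | succ k ih =>
    intro hk
    refine Relation.EqvGen.trans _ _ _ (ih (by omega)) ?_
    exact Relation.EqvGen.rel _ _ (braidStep_Qm (n - 1 - k) (by omega) _)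

theorem S_spec {n : ℕ} (u : Fin (n + 1) → G) : ∀ k, k ≤ n → ∀ j : Fin (n + 1),
    (j.val < n - k → S u k j = u j) ∧
    (j.val = n - k → S u k j =
      pp u (n - k) * u ⟨n, Nat.lt_succ_self n⟩ * (pp u (n - k))⁻¹) ∧
    (n - k < j.val → S u k j = u ⟨j.val - 1, by omega⟩) := by
  intro k
  induction k with
  | zero =>
    intro _ j
    refine ⟨fun _ => rfl, fun hj => ?_, fun hj => absurd j.isLt (by omega)⟩
    simp only [Nat.sub_zero] at hj ⊢
    rw [pp_top u n (by omega)]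
    show u j = 1 * u _ * 1⁻¹
    rw [one_mul, inv_one, mul_one]
    congr 1
    exact Fin.ext hj
  | succ k ih =>
    intro hk j
    have hk' : k ≤ n := by omega
    set m := n - 1 - k with hmdef
    have hm1 : m + 1 = n - k := by omega
    have hm2 : n - (k + 1) = m := by omega
    have hlt : m + 1 < n + 1 := by omega
    have hS : S u (k + 1) = Qm m (S u k) := rfl
    refine ⟨?_, ?_, ?_⟩
    · intro hj
      rw [hS]
      have hjm : j.val ≠ m := by omega
      have hjm1 : j.val ≠ m + 1 := by omega
      simp only [Qm, dif_pos hlt, if_neg hjm, if_neg hjm1]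
      exact (ih hk' j).1 (by omega)
    · intro hj
      rw [hS]
      have hjm : j.val = m := by omega
      simp only [Qm, dif_pos hlt, if_pos hjm]
      have e1 : S u k ⟨m, Nat.lt_of_succ_lt hlt⟩ = u ⟨m, Nat.lt_of_succ_lt hlt⟩ :=
        (ih hk' _).1 (by simp only []; omega)
      have e2 : S u k ⟨m + 1, hlt⟩ =
          pp u (n - k) * u ⟨n, Nat.lt_succ_self n⟩ * (pp u (n - k))⁻¹ :=
        (ih hk' _).2.1 (by simp only []; omega)
      have hpp : pp u (n - k) = pp u (m + 1) := by rw [hm1]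
      rw [e1, e2, hm2, pp_succ u m (by omega), hpp]
      group
    · intro hj
      rw [hS]
      by_cases hjm1 : j.val = m + 1
      · simp only [Qm, dif_pos hlt, if_neg (by omega : ¬ j.val = m), if_pos hjm1]
        have e1 : S u k ⟨m, Nat.lt_of_succ_lt hlt⟩ = u ⟨m, Nat.lt_of_succ_lt hlt⟩ :=
          (ih hk' _).1 (by simp only []; omega)
        rw [e1]
        congr 1
        exact Fin.ext (by simp [hjm1])
      · have hjm : j.val ≠ m := by omega
        simp only [Qm, dif_pos hlt, if_neg hjm, if_neg hjm1]
        exact (ih hk' j).2.2 (by omega)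

/-- Rotation of a tuple: `rotT v i = v (i + 1)`. -/
def rotT {n : ℕ} (v : Fin (n + 1) → G) : Fin (n + 1) → G := fun i => v (i + 1)

theorem rotT_prod {n : ℕ} (v : Fin (n + 1) → G) :
    (List.ofFn (rotT v)).prod = (v 0)⁻¹ * (List.ofFn v).prod * v 0 := by
  have hcast : ∀ i : Fin n, (i.castSucc + 1 : Fin (n + 1)) = i.succ := by
    intro i
    apply Fin.ext
    rw [fin_add_one_val _ (by simp)]
    simp
  have h1 : List.ofFn (rotT v) = (List.ofFn fun i : Fin n => v i.succ).concat (v 0) := by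
    rw [List.ofFn_succ' (rotT v)]
    congr 1
    · congr 1
      funext i
      show v (i.castSucc + 1) = v i.succ
      rw [hcast]
    · show v (Fin.last n + 1) = v 0
      rw [Fin.last_add_one]
  have h2 : List.ofFn v = v 0 :: List.ofFn fun i : Fin n => v i.succ := List.ofFn_succ
  rw [h1, h2, List.prod_concat, List.prod_cons]
  group

theorem rot_equiv {n : ℕ} (v : Fin (n + 1) → G) (hp : (List.ofFn v).prod = 1) :
    BraidEquiv (rotT v) v := by
  set u := rotT v with hu
  have hupr : (List.ofFn u).prod = 1 := by rw [hu, rotT_prod, hp]; group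
  have hlastu : u ⟨n, Nat.lt_succ_self n⟩ = v 0 := by
    show v (⟨n, Nat.lt_succ_self n⟩ + 1) = v 0
    rw [fin_add_one_last _ rfl]
  have hppu : pp u 0 = (v 0)⁻¹ := by
    have h0 := pp_spec u n (le_refl n)
    simp only [Nat.sub_self, List.drop_zero] at h0
    rw [hupr, hlastu] at h0
    exact eq_inv_of_mul_eq_one_left h0
  have hSn : S u n = v := by
    funext j
    rcases Nat.eq_zero_or_pos j.val with hj | hj
    · have h0 := (S_spec u n (le_refl n) j).2.1 (by omega)
      simp only [Nat.sub_self] at h0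
      rw [h0, hppu, hlastu]
      have hj0 : j = 0 := Fin.ext (by simpa using hj)
      rw [hj0]
      group
    · have hjl := j.isLt
      have h0 := (S_spec u n (le_refl n) j).2.2 (by omega)
      rw [h0]
      show v (⟨j.val - 1, _⟩ + 1) = v j
      congr 1
      apply Fin.ext
      rw [fin_add_one_val _ (by exact (show j.val - 1 < n by omega))]
      show j.val - 1 + 1 = j.val
      omega
  have := S_equiv u n (le_refl n)
  rw [hSn] at this
  exact this

/-- The chain realizing conjugation by the first entry (followed by a rotation). -/
def C {n : ℕ} (v : Fin (n + 1) → G) : ℕ → (Fin (n + 1) → G)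
  | 0 => v
  | (k + 1) => Qm k (C v k)

theorem C_equiv {n : ℕ} (v : Fin (n + 1) → G) : ∀ k, k ≤ n → BraidEquiv v (C v k) := by
  intro k
  induction k with
  | zero => intro _; exact Relation.EqvGen.refl _
  | succ k ih =>
    intro hk
    refine Relation.EqvGen.trans _ _ _ (ih (by omega)) ?_
    exact Relation.EqvGen.rel _ _ (braidStep_Qm k (by omega) _)

theorem C_spec {n : ℕ} (v : Fin (n + 1) → G) : ∀ (k : ℕ) (hk : k ≤ n) (j : Fin (n + 1)),
    (∀ (hjk : j.val < k), C v k j = v 0 * v ⟨j.val + 1, by omega⟩ * (v 0)⁻¹) ∧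
    (j.val = k → C v k j = v 0) ∧
    (k < j.val → C v k j = v j) := by
  intro k
  induction k with
  | zero =>
    intro _ j
    refine ⟨fun hj => absurd hj (by omega), fun hj => ?_, fun _ => rfl⟩
    show v j = v 0
    congr 1
    exact Fin.ext (by simpa using hj)
  | succ k ih =>
    intro hk j
    have hk' : k ≤ n := by omega
    have hlt : k + 1 < n + 1 := by omega
    have hC : C v (k + 1) = Qm k (C v k) := rfl
    refine ⟨?_, ?_, ?_⟩
    · intro hj
      rw [hC]
      by_cases hjk : j.val = k
      · simp only [Qm, dif_pos hlt, if_pos hjk]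
        have e1 : C v k ⟨k, Nat.lt_of_succ_lt hlt⟩ = v 0 := (ih hk' _).2.1 rfl
        have e2 : C v k ⟨k + 1, hlt⟩ = v ⟨k + 1, hlt⟩ := (ih hk' _).2.2 (by exact (show k < k + 1 by omega))
        rw [e1, e2]
        have hx : (⟨k + 1, hlt⟩ : Fin (n + 1)) = ⟨j.val + 1, by omega⟩ :=
          Fin.ext (by exact (show k + 1 = j.val + 1 by omega))
        rw [hx]
      · have hjk1 : j.val ≠ k + 1 := by omega
        simp only [Qm, dif_pos hlt, if_neg hjk, if_neg hjk1]
        exact (ih hk' j).1 (by omega)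
    · intro hj
      rw [hC]
      simp only [Qm, dif_pos hlt, if_neg (by omega : ¬ j.val = k), if_pos hj]
      exact (ih hk' _).2.1 rfl
    · intro hj
      rw [hC]
      have hjk : j.val ≠ k := by omega
      have hjk1 : j.val ≠ k + 1 := by omega
      simp only [Qm, dif_pos hlt, if_neg hjk, if_neg hjk1]
      exact (ih hk' j).2.2 (by omega)

theorem conj_first {n : ℕ} (v : Fin (n + 1) → G) (hp : (List.ofFn v).prod = 1) :
    BraidEquiv v (cnj (v 0) v) := by
  have hCn : C v n = rotT (cnj (v 0) v) := by
    funext j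
    rcases Nat.lt_or_ge j.val n with hj | hj
    · have h0 := (C_spec v n (le_refl n) j).1 hj
      rw [h0]
      show v 0 * v ⟨j.val + 1, by omega⟩ * (v 0)⁻¹ = v 0 * v (j + 1) * (v 0)⁻¹
      rw [show (j + 1 : Fin (n + 1)) = ⟨j.val + 1, by omega⟩ from Fin.ext (fin_add_one_val j hj)]
    · have hjn : j.val = n := by have := j.isLt; omega
      have h0 := (C_spec v n (le_refl n) j).2.1 hjn
      rw [h0]
      show v 0 = v 0 * v (j + 1) * (v 0)⁻¹
      rw [fin_add_one_last j hjn]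
      group
  have h1 : BraidEquiv v (rotT (cnj (v 0) v)) := by
    rw [← hCn]; exact C_equiv v n (le_refl n)
  have h2 : BraidEquiv (rotT (cnj (v 0) v)) (cnj (v 0) v) := by
    apply rot_equiv
    rw [cnj_prod, hp]
    group
  exact Relation.EqvGen.trans _ _ _ h1 h2

open Fin.NatCast in
theorem rotT_iter_apply {n : ℕ} :
    ∀ (k : ℕ) (v : Fin (n + 1) → G) (i : Fin (n + 1)),
      (rotT^[k] v) i = v (i + (k : Fin (n + 1))) := by
  intro k
  induction k with
  | zero => intro v i; simp
  | succ k ih =>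
    intro v i
    rw [Function.iterate_succ_apply, ih (rotT v) i]
    show v (i + (k : Fin (n + 1)) + 1) = v (i + ((k + 1 : ℕ) : Fin (n + 1)))
    congr 1
    rw [Nat.cast_add, Nat.cast_one, add_assoc]

theorem rotT_iter_equiv {n : ℕ} (v : Fin (n + 1) → G) (hp : (List.ofFn v).prod = 1) :
    ∀ k : ℕ, (List.ofFn (rotT^[k] v)).prod = 1 ∧ BraidEquiv v (rotT^[k] v) := by
  intro k
  induction k with
  | zero => exact ⟨hp, Relation.EqvGen.refl _⟩
  | succ k ih =>
    rw [Function.iterate_succ_apply']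
    constructor
    · rw [rotT_prod, ih.1]; group
    · refine Relation.EqvGen.trans _ _ _ ih.2 ?_
      exact Relation.EqvGen.symm _ _ (rot_equiv _ ih.1)

theorem conj_entry {n : ℕ} (v : Fin (n + 1) → G) (hp : (List.ofFn v).prod = 1)
    (j : Fin (n + 1)) : BraidEquiv v (cnj (v j) v) := by
  obtain ⟨hwp, hw⟩ := rotT_iter_equiv v hp j.val
  set w := rotT^[j.val] v with hwdef
  have hw0 : w 0 = v j := by
    rw [hwdef, rotT_iter_apply]
    congr 1
    rw [zero_add, Fin.cast_val_eq_self]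
  have h2 : BraidEquiv w (cnj (v j) w) := by
    have := conj_first w hwp
    rwa [hw0] at this
  have h3 : BraidEquiv (cnj (v j) w) (cnj (v j) v) :=
    braidEquiv_cnj _ (Relation.EqvGen.symm _ _ hw)
  exact Relation.EqvGen.trans _ _ _ (Relation.EqvGen.trans _ _ _ hw h2) h3

theorem conj_closure {r : ℕ} (v : Fin r → G) (hp : (List.ofFn v).prod = 1)
    {g : G} (hg : g ∈ Subgroup.closure (Set.range v)) : BraidEquiv v (cnj g v) := by
  induction hg using Subgroup.closure_induction with
  | mem x hx =>
    obtain ⟨j, rfl⟩ := hx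
    match r, v, hp, j with
    | (n + 1), v, hp, j => exact conj_entry v hp j
  | one =>
    have h0 : cnj (1 : G) v = v := funext fun i => by simp [cnj]
    rw [h0]
    exact Relation.EqvGen.refl _
  | mul x y hx hy ihx ihy =>
    have key : cnj (x * y) v = cnj x (cnj y v) := funext fun i => by simp [cnj]; group
    rw [key]
    exact Relation.EqvGen.trans _ _ _ ihx (braidEquiv_cnj x ihy)
  | inv x hx ihx =>
    have key : cnj x⁻¹ (cnj x v) = v := funext fun i => by
      show x⁻¹ * (x * v i * x⁻¹) * x⁻¹⁻¹ = v i
      group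
    have h0 := braidEquiv_cnj x⁻¹ ihx
    rw [key] at h0
    exact Relation.EqvGen.symm _ _ h0

section Append

variable {r s : ℕ}

theorem app_left {α : Type*} (u : Fin r → α) (w : Fin s → α) (m : ℕ) (hm : m < r)
    (h' : m < r + s) : Fin.append u w ⟨m, h'⟩ = u ⟨m, hm⟩ :=
  Fin.append_left u w ⟨m, hm⟩

theorem app_right {α : Type*} (u : Fin r → α) (w : Fin s → α) (m : ℕ) (hm : m < s)
    (h' : r + m < r + s) : Fin.append u w ⟨r + m, h'⟩ = w ⟨m, hm⟩ :=
  Fin.append_right u w ⟨m, hm⟩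

theorem braidStep_append_left {a a' : Fin r → G} (b : Fin s → G) (h : BraidStep a a') :
    BraidStep (Fin.append a b) (Fin.append a' b) := by
  obtain ⟨i, hi, h1, h2, h3⟩ := h
  refine ⟨i, by omega, ?_, ?_, ?_⟩
  · rw [app_left a' b i (by omega), app_left a b i (by omega), app_left a b (i + 1) (by omega)]
    exact h1
  · rw [app_left a' b (i + 1) (by omega), app_left a b i (by omega)]
    exact h2
  · intro j hj hj'
    rcases Nat.lt_or_ge j.val r with hjr | hjr
    · have he : j = ⟨j.val, j.isLt⟩ := rfl
      rw [he, app_left a' b j.val hjr, app_left a b j.val hjr]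
      exact h3 ⟨j.val, hjr⟩ hj hj'
    · have he : j = ⟨r + (j.val - r), by omega⟩ := Fin.ext (by exact (show j.val = r + (j.val - r) by omega))
      rw [he, app_right a' b (j.val - r) (by omega), app_right a b (j.val - r) (by omega)]

theorem braidStep_append_right (a : Fin r → G) {b b' : Fin s → G} (h : BraidStep b b') :
    BraidStep (Fin.append a b) (Fin.append a b') := by
  obtain ⟨i, hi, h1, h2, h3⟩ := h
  refine ⟨r + i, by omega, ?_, ?_, ?_⟩
  · rw [app_right a b' i (by omega), app_right a b i (by omega),
      show (⟨r + i + 1, by omega⟩ : Fin (r + s)) = ⟨r + (i + 1), by omega⟩ from rfl,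
      app_right a b (i + 1) (by omega)]
    exact h1
  · rw [show (⟨r + i + 1, by omega⟩ : Fin (r + s)) = ⟨r + (i + 1), by omega⟩ from rfl,
      app_right a b' (i + 1) (by omega), app_right a b i (by omega)]
    exact h2
  · intro j hj hj'
    rcases Nat.lt_or_ge j.val r with hjr | hjr
    · have he : j = ⟨j.val, j.isLt⟩ := rfl
      rw [he, app_left a b' j.val hjr, app_left a b j.val hjr]
    · have he : j = ⟨r + (j.val - r), by omega⟩ := Fin.ext (by exact (show j.val = r + (j.val - r) by omega))
      rw [he, app_right a b' (j.val - r) (by omega), app_right a b (j.val - r) (by omega)]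
      exact h3 ⟨j.val - r, by omega⟩ (by exact (show j.val - r ≠ i by omega))
        (by exact (show j.val - r ≠ i + 1 by omega))

theorem braidEquiv_append_left {a a' : Fin r → G} (b : Fin s → G) (h : BraidEquiv a a') :
    BraidEquiv (Fin.append a b) (Fin.append a' b) := by
  induction h with
  | rel x y hxy => exact Relation.EqvGen.rel _ _ (braidStep_append_left b hxy)
  | refl x => exact Relation.EqvGen.refl _
  | symm x y _ ih => exact Relation.EqvGen.symm _ _ ih
  | trans x y z _ _ ih1 ih2 => exact Relation.EqvGen.trans _ _ _ ih1 ih2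

theorem braidEquiv_append_right (a : Fin r → G) {b b' : Fin s → G} (h : BraidEquiv b b') :
    BraidEquiv (Fin.append a b) (Fin.append a b') := by
  induction h with
  | rel x y hxy => exact Relation.EqvGen.rel _ _ (braidStep_append_right a hxy)
  | refl x => exact Relation.EqvGen.refl _
  | symm x y _ ih => exact Relation.EqvGen.symm _ _ ih
  | trans x y z _ _ ih1 ih2 => exact Relation.EqvGen.trans _ _ _ ih1 ih2

theorem cnj_append (g : G) (u : Fin r → G) (w : Fin s → G) :
    cnj g (Fin.append u w) = Fin.append (cnj g u) (cnj g w) := by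
  funext j
  rcases Nat.lt_or_ge j.val r with hjr | hjr
  · have he : j = ⟨j.val, j.isLt⟩ := rfl
    show g * Fin.append u w j * g⁻¹ = Fin.append (cnj g u) (cnj g w) j
    rw [he, app_left u w j.val hjr, app_left (cnj g u) (cnj g w) j.val hjr]
    rfl
  · have he : j = ⟨r + (j.val - r), by omega⟩ := Fin.ext (by exact (show j.val = r + (j.val - r) by omega))
    show g * Fin.append u w j * g⁻¹ = Fin.append (cnj g u) (cnj g w) j
    rw [he, app_right u w (j.val - r) (by omega), app_right (cnj g u) (cnj g w) (j.val - r) (by omega)]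
    rfl

theorem range_append {α : Type*} (u : Fin r → α) (w : Fin s → α) :
    Set.range (Fin.append u w) = Set.range u ∪ Set.range w := by
  ext x
  constructor
  · rintro ⟨j, rfl⟩
    rcases Nat.lt_or_ge j.val r with hjr | hjr
    · exact Or.inl ⟨⟨j.val, hjr⟩, (app_left u w j.val hjr j.isLt).symm⟩
    · refine Or.inr ⟨⟨j.val - r, by omega⟩, ?_⟩
      refine (app_right u w (j.val - r) (by omega) (by omega)).symm.trans ?_
      exact congrArg (Fin.append u w) (Fin.ext (by exact (show r + (j.val - r) = j.val by omega)))
  · rintro (⟨i, rfl⟩ | ⟨i, rfl⟩)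
    · exact ⟨⟨i.val, by omega⟩, app_left u w i.val i.isLt (by omega)⟩
    · exact ⟨⟨r + i.val, by omega⟩, app_right u w i.val i.isLt (by omega)⟩

end Append

end SeguinAux

/-- Singleton lemma for products of components (key step of Seguin's field-of-definition
theorem): if `⟨H,K⟩ = HK`, `a` is a tuple generating `H` with product `1`, `b` a tuple
generating `K` with product `1`, then for all `γ, δ ∈ ⟨H,K⟩` with
`⟨γHγ⁻¹, δKδ⁻¹⟩ = ⟨H,K⟩`, the concatenation `(a^γ, b^δ)` is braid-equivalent to the
concatenation `(a, b)`. -/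
theorem seguin_singleton_lemma {G : Type*} [Group G] [Finite G] (H K : Subgroup G)
    (hHK : ((H ⊔ K : Subgroup G) : Set G) = (H : Set G) * (K : Set G))
    {r s : ℕ} (a : Fin r → G) (b : Fin s → G)
    (haH : ∀ i, a i ∈ H) (haprod : (List.ofFn a).prod = 1)
    (hagen : Subgroup.closure (Set.range a) = H)
    (hbK : ∀ i, b i ∈ K) (hbprod : (List.ofFn b).prod = 1)
    (hbgen : Subgroup.closure (Set.range b) = K)
    (γ δ : G) (hγ : γ ∈ H ⊔ K) (hδ : δ ∈ H ⊔ K)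
    (hjoin : Subgroup.map ((MulAut.conj γ).toMonoidHom) H ⊔
        Subgroup.map ((MulAut.conj δ).toMonoidHom) K = H ⊔ K) :
    BraidEquiv
      (Fin.append (fun i => γ * a i * γ⁻¹) (fun j => δ * b j * δ⁻¹))
      (Fin.append a b) := by
  open SeguinAux in
  -- decompose γ⁻¹ * δ as h₀ * k₀ with h₀ ∈ H, k₀ ∈ K
  have hmem : γ⁻¹ * δ ∈ ((H ⊔ K : Subgroup G) : Set G) := mul_mem (inv_mem hγ) hδ
  rw [hHK] at hmem
  obtain ⟨h₀, hh₀, k₀, hk₀, hhk⟩ := Set.mem_mul.mp hmem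
  have haγ : (fun i => γ * a i * γ⁻¹) = cnj γ a := rfl
  have hbδ : (fun j => δ * b j * δ⁻¹) = cnj δ b := rfl
  rw [haγ, hbδ]
  -- products
  have hpa : (List.ofFn (cnj γ a)).prod = 1 := by rw [cnj_prod, haprod]; group
  have hpb : (List.ofFn (cnj δ b)).prod = 1 := by rw [cnj_prod, hbprod]; group
  have hpab : (List.ofFn (Fin.append (cnj γ a) (cnj δ b))).prod = 1 := by
    rw [List.ofFn_fin_append, List.prod_append, hpa, hpb, one_mul]
  -- closure of the range of the conjugated concatenation
  have hconjcl : ∀ (g : G) (m : ℕ) (v : Fin m → G),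
      Subgroup.closure (Set.range (cnj g v)) =
        Subgroup.map ((MulAut.conj g).toMonoidHom) (Subgroup.closure (Set.range v)) := by
    intro g m v
    rw [MonoidHom.map_closure]
    congr 1
    rw [← Set.range_comp]
    rfl
  have hrange : Subgroup.closure (Set.range (Fin.append (cnj γ a) (cnj δ b))) = H ⊔ K := by
    rw [range_append, Subgroup.closure_union, hconjcl, hconjcl, hagen, hbgen, hjoin]
  -- Step A : conjugate everything by γ⁻¹
  have hstepA : BraidEquiv (Fin.append (cnj γ a) (cnj δ b))
      (cnj γ⁻¹ (Fin.append (cnj γ a) (cnj δ b))) :=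
    conj_closure _ hpab (by rw [hrange]; exact inv_mem hγ)
  have hB : cnj γ⁻¹ (Fin.append (cnj γ a) (cnj δ b)) =
      Fin.append a (cnj h₀ (cnj k₀ b)) := by
    rw [cnj_append]
    have e1 : cnj γ⁻¹ (cnj γ a) = a := funext fun i => by
      show γ⁻¹ * (γ * a i * γ⁻¹) * γ⁻¹⁻¹ = a i; group
    have e2 : cnj γ⁻¹ (cnj δ b) = cnj h₀ (cnj k₀ b) := funext fun j => by
      show γ⁻¹ * (δ * b j * δ⁻¹) * γ⁻¹⁻¹ = h₀ * (k₀ * b j * k₀⁻¹) * h₀⁻¹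
      rw [show γ⁻¹ * (δ * b j * δ⁻¹) * γ⁻¹⁻¹ = (γ⁻¹ * δ) * b j * (γ⁻¹ * δ)⁻¹ by group, ← hhk]
      group
    rw [e1, e2]
  rw [hB] at hstepA
  -- Step B : conjugate everything by h₀⁻¹
  have hpb2 : (List.ofFn (cnj h₀ (cnj k₀ b))).prod = 1 := by
    rw [cnj_prod, cnj_prod, hbprod]; group
  have hpab2 : (List.ofFn (Fin.append a (cnj h₀ (cnj k₀ b)))).prod = 1 := by
    rw [List.ofFn_fin_append, List.prod_append, haprod, hpb2, one_mul]
  have hsub : H ≤ Subgroup.closure (Set.range (Fin.append a (cnj h₀ (cnj k₀ b)))) := by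
    rw [← hagen]
    apply Subgroup.closure_mono
    rw [range_append]
    exact Set.subset_union_left
  have hstepB : BraidEquiv (Fin.append a (cnj h₀ (cnj k₀ b)))
      (cnj h₀⁻¹ (Fin.append a (cnj h₀ (cnj k₀ b)))) :=
    conj_closure _ hpab2 (hsub (inv_mem hh₀))
  have hC : cnj h₀⁻¹ (Fin.append a (cnj h₀ (cnj k₀ b))) =
      Fin.append (cnj h₀⁻¹ a) (cnj k₀ b) := by
    rw [cnj_append]
    have e2 : cnj h₀⁻¹ (cnj h₀ (cnj k₀ b)) = cnj k₀ b := funext fun j => by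
      show h₀⁻¹ * (h₀ * (k₀ * b j * k₀⁻¹) * h₀⁻¹) * h₀⁻¹⁻¹ = k₀ * b j * k₀⁻¹
      group
    rw [e2]
  rw [hC] at hstepB
  -- Step C : undo the conjugation on the `a` part
  have hstepC : BraidEquiv (Fin.append (cnj h₀⁻¹ a) (cnj k₀ b)) (Fin.append a (cnj k₀ b)) :=
    braidEquiv_append_left _ (Relation.EqvGen.symm _ _
      (conj_closure a haprod (by rw [hagen]; exact inv_mem hh₀)))
  -- Step D : undo the conjugation on the `b` part
  have hstepD : BraidEquiv (Fin.append a (cnj k₀ b)) (Fin.append a b) :=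
    braidEquiv_append_right _ (Relation.EqvGen.symm _ _
      (conj_closure b hbprod (by rw [hbgen]; exact hk₀)))
  exact Relation.EqvGen.trans _ _ _ hstepA
    (Relation.EqvGen.trans _ _ _ hstepB (Relation.EqvGen.trans _ _ _ hstepC hstepD))
end
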